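/- Let θ ∈ ℝ and s, w ∈ ℝ^m. The vector φ = (P s; Q w) ∈ ℝ^{M+N} satisfies the harmonic Petrov–Galerkin condition (Ã − θ I) φ ⟂ Ã (P x; Q y) for all x, y ∈ ℝ^m if and only if θ·(B w) = (B Bᵀ + β² e_m e_mᵀ) s and θ·(Bᵀ s) = Bᵀ B w. -/

import Mathlib

open Matrix

noncomputable def eNormR {ι : Type*} [Fintype ι] (v : ι → ℝ) : ℝ :=
  Real.sqrt (∑ i, v i ^ 2)

def eLast (m : ℕ) : Fin m → ℝ := fun i => if (i : ℕ) = m - 1 then 1 else 0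

def HarmonicPencil {m : ℕ} (B : Matrix (Fin m) (Fin m) ℝ) (β θ : ℝ)
    (s w : Fin m → ℝ) : Prop :=
  θ • B.mulVec w = (B * Bᵀ + β ^ 2 • vecMulVec (eLast m) (eLast m)).mulVec s ∧
  θ • Bᵀ.mulVec s = (Bᵀ * B).mulVec w

noncomputable def specNorm {m n : Type*} [Fintype m] [Fintype n] [DecidableEq n]
    (A : Matrix m n ℝ) : ℝ :=
  ‖LinearMap.toContinuousLinearMap (Matrix.toEuclideanLin A)‖

noncomputable def sep {n : Type*} [Fintype n] [DecidableEq n] (a : ℝ) (G : Matrix n n ℝ) : ℝ :=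
  sInf {r | ∃ x : n → ℝ, eNormR x = 1 ∧ r = eNormR ((a • (1 : Matrix n n ℝ) - G).mulVec x)}

noncomputable def sigmaMin {m n : Type*} [Fintype m] [Fintype n] (C : Matrix m n ℝ) : ℝ :=
  sSup {c | 0 ≤ c ∧ ∀ h, c * eNormR h ≤ eNormR (C.mulVec h)}

noncomputable def sinAngleVec {ι : Type*} [Fintype ι] (x y : ι → ℝ) : ℝ :=
  Real.sqrt (1 - (x ⬝ᵥ y) ^ 2 / (eNormR x ^ 2 * eNormR y ^ 2))

noncomputable def toE {ι : Type*} (v : ι → ℝ) : EuclideanSpace ℝ ι :=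
  (WithLp.equiv 2 (ι → ℝ)).symm v

noncomputable def ofE {ι : Type*} (v : EuclideanSpace ℝ ι) : ι → ℝ :=
  WithLp.equiv 2 (ι → ℝ) v

noncomputable def sinAngleSub {ι : Type*} [Fintype ι] (x : EuclideanSpace ℝ ι)
    (E : Submodule ℝ (EuclideanSpace ℝ ι)) : ℝ :=
  ‖x - (E.orthogonalProjection x : EuclideanSpace ℝ ι)‖ / ‖x‖

def Atilde {M N : ℕ} (A : Matrix (Fin M) (Fin N) ℝ) :
    Matrix (Fin M ⊕ Fin N) (Fin M ⊕ Fin N) ℝ :=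
  fromBlocks 0 A Aᵀ 0

def Btilde {m : ℕ} (B : Matrix (Fin m) (Fin m) ℝ) :
    Matrix (Fin m ⊕ Fin m) (Fin m ⊕ Fin m) ℝ :=
  fromBlocks 0 B Bᵀ 0

noncomputable def Ctilde {m : ℕ} (B : Matrix (Fin m) (Fin m) ℝ) (β : ℝ) :
    Matrix (Fin m ⊕ Fin m) (Fin m ⊕ Fin m) ℝ :=
  fromBlocks (B * Bᵀ + β ^ 2 • vecMulVec (eLast m) (eLast m)) 0 0 (Bᵀ * B)

noncomputable def colSpanE {M N m : ℕ} (P : Matrix (Fin M) (Fin m) ℝ)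
    (Q : Matrix (Fin N) (Fin m) ℝ) : Submodule ℝ (EuclideanSpace ℝ (Fin M ⊕ Fin N)) :=
  Submodule.span ℝ {z | ∃ x y : Fin m → ℝ, z = toE (Sum.elim (P.mulVec x) (Q.mulVec y))}

noncomputable def Mrho {m : ℕ} (B : Matrix (Fin m) (Fin m) ℝ) (β ρ : ℝ) :
    Matrix ((Fin m ⊕ Fin m) ⊕ Unit) (Fin m ⊕ Fin m) ℝ :=
  Matrix.fromRows
    (fromBlocks (-(ρ • (1 : Matrix (Fin m) (Fin m) ℝ))) B Bᵀ (-(ρ • 1)))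
    (Matrix.of fun (_ : Unit) j => Sum.elim (β • eLast m) (0 : Fin m → ℝ) j)

theorem stmt3 (m M N : ℕ) (hm : 0 < m)
    (A : Matrix (Fin M) (Fin N) ℝ)
    (P : Matrix (Fin M) (Fin m) ℝ) (Q : Matrix (Fin N) (Fin m) ℝ)
    (hP : Pᵀ * P = 1) (hQ : Qᵀ * Q = 1)
    (B : Matrix (Fin m) (Fin m) ℝ) (β : ℝ) (q : Fin N → ℝ)
    (hq : eNormR q = 1) (hQq : Qᵀ.mulVec q = 0)
    (hAQ : A * Q = P * B)
    (hAP : Aᵀ * P = Q * Bᵀ + β • vecMulVec q (eLast m))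
    (θ : ℝ) (s w : Fin m → ℝ) :
    (∀ x y : Fin m → ℝ,
      ((Atilde A).mulVec (Sum.elim (P.mulVec s) (Q.mulVec w))
          - θ • Sum.elim (P.mulVec s) (Q.mulVec w)) ⬝ᵥ
        (Atilde A).mulVec (Sum.elim (P.mulVec x) (Q.mulVec y)) = 0)
    ↔ HarmonicPencil B β θ s w := by

  classical
  have hq2 : q ⬝ᵥ q = 1 := by
    have hnn : (0:ℝ) ≤ ∑ i, q i ^ 2 := Finset.sum_nonneg fun i _ => sq_nonneg _
    have h1 : ∑ i, q i ^ 2 = 1 := by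
      have := hq
      unfold eNormR at this
      nlinarith [Real.sq_sqrt hnn]
    simpa [dotProduct, pow_two] using h1
  have hPP : ∀ a b : Fin m → ℝ, P.mulVec a ⬝ᵥ P.mulVec b = a ⬝ᵥ b := by
    intro a b
    rw [Matrix.dotProduct_mulVec, ← Matrix.mulVec_transpose, Matrix.mulVec_mulVec, hP,
      Matrix.one_mulVec]
  have hQQ : ∀ a b : Fin m → ℝ, Q.mulVec a ⬝ᵥ Q.mulVec b = a ⬝ᵥ b := by
    intro a b
    rw [Matrix.dotProduct_mulVec, ← Matrix.mulVec_transpose, Matrix.mulVec_mulVec, hQ,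
      Matrix.one_mulVec]
  have hqQ : ∀ a : Fin m → ℝ, q ⬝ᵥ Q.mulVec a = 0 := by
    intro a
    rw [Matrix.dotProduct_mulVec, ← Matrix.mulVec_transpose, hQq, zero_dotProduct]
  have hQz : ∀ a : Fin m → ℝ, Q.mulVec a ⬝ᵥ q = 0 := fun a => by
    rw [dotProduct_comm]; exact hqQ a
  have hvv : ∀ (c : ℝ) (u : Fin m → ℝ), (c • vecMulVec q (eLast m)).mulVec u
      = (c * (eLast m ⬝ᵥ u)) • q := by
    intro c u
    ext i
    simp [Matrix.mulVec, Matrix.vecMulVec_apply, dotProduct, Finset.mul_sum, mul_comm,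
      mul_assoc, mul_left_comm]
  have hvv2 : ∀ (c : ℝ) (u : Fin m → ℝ), (c • vecMulVec (eLast m) (eLast m)).mulVec u
      = (c * (eLast m ⬝ᵥ u)) • eLast m := by
    intro c u
    ext i
    simp [Matrix.mulVec, Matrix.vecMulVec_apply, dotProduct, Finset.mul_sum, mul_comm,
      mul_assoc, mul_left_comm]
  have hAv : ∀ u v : Fin m → ℝ, (Atilde A).mulVec (Sum.elim (P.mulVec u) (Q.mulVec v))
      = Sum.elim (P.mulVec (B.mulVec v))
          (Q.mulVec (Bᵀ.mulVec u) + (β * (eLast m ⬝ᵥ u)) • q) := by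
    intro u v
    unfold Atilde
    rw [Matrix.fromBlocks_mulVec]
    simp only [Sum.elim_comp_inl, Sum.elim_comp_inr, Matrix.zero_mulVec, zero_add, add_zero,
      Matrix.mulVec_mulVec]
    rw [hAQ, hAP, Matrix.add_mulVec, hvv]
    simp [Matrix.mulVec_mulVec]
  have key : ∀ x y : Fin m → ℝ,
      ((Atilde A).mulVec (Sum.elim (P.mulVec s) (Q.mulVec w))
          - θ • Sum.elim (P.mulVec s) (Q.mulVec w)) ⬝ᵥ
        (Atilde A).mulVec (Sum.elim (P.mulVec x) (Q.mulVec y))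
      = ((B * Bᵀ + β ^ 2 • vecMulVec (eLast m) (eLast m)).mulVec s - θ • B.mulVec w) ⬝ᵥ x
        + ((Bᵀ * B).mulVec w - θ • Bᵀ.mulVec s) ⬝ᵥ y := by
    intro x y
    rw [hAv, hAv]
    have hsub : (Sum.elim (P.mulVec (B.mulVec w))
          (Q.mulVec (Bᵀ.mulVec s) + (β * (eLast m ⬝ᵥ s)) • q)
        - θ • Sum.elim (P.mulVec s) (Q.mulVec w))
      = Sum.elim (P.mulVec (B.mulVec w - θ • s))
          (Q.mulVec (Bᵀ.mulVec s - θ • w) + (β * (eLast m ⬝ᵥ s)) • q) := by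
      funext i
      cases i with
      | inl i => simp [Matrix.mulVec_sub, Matrix.mulVec_smul]
      | inr i =>
          simp [Matrix.mulVec_sub, Matrix.mulVec_smul]
          ring
    rw [hsub, sumElim_dotProduct_sumElim, hPP]
    have h2 : (Q.mulVec (Bᵀ.mulVec s - θ • w) + (β * (eLast m ⬝ᵥ s)) • q) ⬝ᵥ
        (Q.mulVec (Bᵀ.mulVec x) + (β * (eLast m ⬝ᵥ x)) • q)
        = (Bᵀ.mulVec s - θ • w) ⬝ᵥ Bᵀ.mulVec x
          + (β * (eLast m ⬝ᵥ s)) * (β * (eLast m ⬝ᵥ x)) := by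
      simp only [add_dotProduct, dotProduct_add, smul_dotProduct,
        dotProduct_smul, hQQ, hqQ, hQz, hq2, smul_eq_mul, mul_zero, zero_mul,
        add_zero, zero_add, mul_one, smul_zero]
      ring
    rw [h2]
    have e1 : (B.mulVec w - θ • s) ⬝ᵥ B.mulVec y
        = ((Bᵀ * B).mulVec w - θ • Bᵀ.mulVec s) ⬝ᵥ y := by
      rw [Matrix.dotProduct_mulVec, ← Matrix.mulVec_transpose, Matrix.mulVec_sub,
        Matrix.mulVec_mulVec, Matrix.mulVec_smul]
    have e2 : (Bᵀ.mulVec s - θ • w) ⬝ᵥ Bᵀ.mulVec x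
          + (β * (eLast m ⬝ᵥ s)) * (β * (eLast m ⬝ᵥ x))
        = ((B * Bᵀ + β ^ 2 • vecMulVec (eLast m) (eLast m)).mulVec s - θ • B.mulVec w) ⬝ᵥ x := by
      rw [Matrix.dotProduct_mulVec, ← Matrix.mulVec_transpose, Matrix.transpose_transpose,
        Matrix.mulVec_sub, Matrix.mulVec_mulVec, Matrix.mulVec_smul,
        Matrix.add_mulVec, hvv2]
      simp only [sub_dotProduct, add_dotProduct, smul_dotProduct,
        smul_eq_mul]
      ring
    rw [e1, e2]
    ring
  constructor
  · intro h
    have hu : (B * Bᵀ + β ^ 2 • vecMulVec (eLast m) (eLast m)).mulVec s - θ • B.mulVec w = 0 := by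
      have := h ((B * Bᵀ + β ^ 2 • vecMulVec (eLast m) (eLast m)).mulVec s - θ • B.mulVec w) 0
      rw [key] at this
      simp only [dotProduct_zero, add_zero] at this
      exact (dotProduct_self_eq_zero).1 this
    have hv : (Bᵀ * B).mulVec w - θ • Bᵀ.mulVec s = 0 := by
      have := h 0 ((Bᵀ * B).mulVec w - θ • Bᵀ.mulVec s)
      rw [key] at this
      simp only [dotProduct_zero, zero_add] at this
      exact (dotProduct_self_eq_zero).1 this
    constructor
    · rw [← sub_eq_zero]
      rw [sub_eq_zero] at hu ⊢
      exact hu.symm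
    · rw [← sub_eq_zero]
      rw [sub_eq_zero] at hv ⊢
      exact hv.symm
  · rintro ⟨h1, h2⟩ x y
    rw [key, ← h1, ← h2]
    simp
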